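/- Let D be a real graded division algebra with D_e ≅ ℂ and D_e not contained in Z(D). Let K = {t ∈ T | Int(X_t) restricts to the identity on D_e}, an index-2 subgroup of T. Then there is a split short exact sequence 1 → U → Z^1(T, D_e^×) → Hom^+(K, ℝ^×) → 1, where U is the unit circle in ℂ, Hom^+(K,ℝ^×) = {χ ∈ Hom(K,ℝ^×) | χ(t²) > 0 for all t ∈ T}, and the map is restriction of cocycles to K. -/

import Mathlib

section Aux

variable {T : Type*} [CommGroup T] (K : Subgroup T) [DecidablePred (· ∈ K)]
  (t₀ : T) (h0 : t₀ * t₀ ∈ K) (hmem : ∀ t : T, t ∉ K → t * t₀⁻¹ ∈ K)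

private noncomputable def realAux (χ : ↥K →* ℝˣ) (t : T) : ℝ :=
  if h : t ∈ K then (χ ⟨t, h⟩ : ℝ)
  else (χ ⟨t * t₀⁻¹, hmem t h⟩ : ℝ) * Real.sqrt |(χ ⟨t₀ * t₀, h0⟩ : ℝ)|

private theorem realAux_ne (χ : ↥K →* ℝˣ) (t : T) : realAux K t₀ h0 hmem χ t ≠ 0 := by
  unfold realAux
  split
  · exact Units.ne_zero _
  · exact mul_ne_zero (Units.ne_zero _)
      (Real.sqrt_ne_zero'.2 (abs_pos.2 (Units.ne_zero _)))

private theorem realAux_hom (hmul : ∀ s t : T, s * t ∈ K ↔ (s ∈ K ↔ t ∈ K))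
    (χ : ↥K →* ℝˣ) (hpos : 0 < (χ ⟨t₀ * t₀, h0⟩ : ℝ)) (s t : T) :
    realAux K t₀ h0 hmem χ (s * t) = realAux K t₀ h0 hmem χ s * realAux K t₀ h0 hmem χ t := by
  unfold realAux
  by_cases hs : s ∈ K <;> by_cases ht : t ∈ K
  · have hst : s * t ∈ K := (hmul s t).2 (iff_of_true hs ht)
    rw [dif_pos hst, dif_pos hs, dif_pos ht,
      show (⟨s * t, hst⟩ : K) = ⟨s, hs⟩ * ⟨t, ht⟩ from rfl, map_mul, Units.val_mul]
  · have hst : s * t ∉ K := fun h => ht (((hmul s t).1 h).1 hs)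
    rw [dif_neg hst, dif_pos hs, dif_neg ht,
      show (⟨s * t * t₀⁻¹, hmem _ hst⟩ : K) = ⟨s, hs⟩ * ⟨t * t₀⁻¹, hmem t ht⟩ from
        Subtype.ext (mul_assoc s t t₀⁻¹), map_mul, Units.val_mul]
    ring
  · have hst : s * t ∉ K := fun h => hs (((hmul s t).1 h).2 ht)
    rw [dif_neg hst, dif_neg hs, dif_pos ht,
      show (⟨s * t * t₀⁻¹, hmem _ hst⟩ : K) = ⟨s * t₀⁻¹, hmem s hs⟩ * ⟨t, ht⟩ from
        Subtype.ext (mul_right_comm s t t₀⁻¹), map_mul, Units.val_mul]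
    ring
  · have hst : s * t ∈ K := (hmul s t).2 (iff_of_false hs ht)
    have hc : Real.sqrt |(χ ⟨t₀ * t₀, h0⟩ : ℝ)| * Real.sqrt |(χ ⟨t₀ * t₀, h0⟩ : ℝ)|
        = (χ ⟨t₀ * t₀, h0⟩ : ℝ) := by
      rw [Real.mul_self_sqrt (abs_nonneg _), abs_of_pos hpos]
    rw [dif_pos hst, dif_neg hs, dif_neg ht,
      show (⟨s * t, hst⟩ : K)
          = ⟨s * t₀⁻¹, hmem s hs⟩ * ⟨t * t₀⁻¹, hmem t ht⟩ * ⟨t₀ * t₀, h0⟩ from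
        Subtype.ext (show s * t = s * t₀⁻¹ * (t * t₀⁻¹) * (t₀ * t₀) by simp [mul_comm, mul_left_comm, mul_assoc, inv_mul_cancel_left]),
      map_mul, map_mul, Units.val_mul, Units.val_mul]
    conv_lhs => rw [← hc]
    ring

private theorem realAux_chi_mul (χ₁ χ₂ : ↥K →* ℝˣ) (t : T) :
    realAux K t₀ h0 hmem (χ₁ * χ₂) t = realAux K t₀ h0 hmem χ₁ t * realAux K t₀ h0 hmem χ₂ t := by
  unfold realAux
  split
  · simp [Units.val_mul]
  · rw [MonoidHom.mul_apply, MonoidHom.mul_apply, Units.val_mul, Units.val_mul, abs_mul,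
      Real.sqrt_mul (abs_nonneg _)]
    ring

end Aux

/-- Cocycles `ν : T → ℂˣ` for the action of `T` on `ℂˣ = D_eˣ` which is trivial on
`K` and complex conjugation on `T ∖ K`. -/
def IsCocycle3 {T : Type*} [CommGroup T] (K : Subgroup T) [DecidablePred (· ∈ K)] (ν : T → ℂˣ) : Prop :=
  ∀ s t : T, (ν (s * t) : ℂ) =
    (if t ∈ K then (ν s : ℂ) else (starRingEnd ℂ) (ν s : ℂ)) * (ν t : ℂ)

/-- The split short exact sequence `1 → U → Z¹(T, D_eˣ) → Hom⁺(K, ℝˣ) → 1`: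
(a) the restriction of any cocycle to `K` is real-valued and positive on squares,
(b) the kernel of restriction consists exactly of the cocycles equal to `1` on `K`
and to a constant unit-circle value on `T ∖ K`, and
(c) restriction admits a multiplicative section defined on
`Hom⁺(K, ℝˣ) = {χ | χ(t²) > 0 ∀ t ∈ T}`. -/
theorem stmt_3 {T : Type*} [CommGroup T] (K : Subgroup T) [DecidablePred (· ∈ K)] (hK : K.index = 2)
    (hsq : ∀ t : T, t * t ∈ K) :
    (∀ ν : T → ℂˣ, IsCocycle3 K ν →
        (∀ s ∈ K, ((ν s : ℂ)).im = 0) ∧ ∀ t : T, 0 < ((ν (t * t) : ℂ)).re) ∧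
    (∀ ν : T → ℂˣ,
        (IsCocycle3 K ν ∧ ∀ s ∈ K, ν s = 1) ↔
          ∃ z : ℂˣ, ‖(z : ℂ)‖ = 1 ∧ ν = fun t => if t ∈ K then 1 else z) ∧
    ∃ sec : (↥K →* ℝˣ) → (T → ℂˣ),
      (∀ χ : ↥K →* ℝˣ, (∀ t : T, (0 : ℝ) < (χ ⟨t * t, hsq t⟩ : ℝ)) →
          IsCocycle3 K (sec χ) ∧ ∀ s : ↥K, ((sec χ (s : T)) : ℂ) = ((χ s : ℝ) : ℂ)) ∧
      ∀ χ₁ χ₂ : ↥K →* ℝˣ, sec (χ₁ * χ₂) = fun t => sec χ₁ t * sec χ₂ t := by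
  have hmul : ∀ s t : T, s * t ∈ K ↔ (s ∈ K ↔ t ∈ K) := fun s t =>
    Subgroup.mul_mem_iff_of_index_two hK
  obtain ⟨t₀, ht₀⟩ : ∃ t : T, t ∉ K := by
    by_contra h
    push_neg at h
    have : K = ⊤ := Subgroup.eq_top_iff' K |>.2 h
    rw [this, Subgroup.index_top] at hK
    omega
  have hmem : ∀ t : T, t ∉ K → t * t₀⁻¹ ∈ K := fun t ht => by
    rw [hmul, K.inv_mem_iff]
    exact iff_of_false ht ht₀
  -- values of a cocycle on K are real
  have real_on_K : ∀ ν : T → ℂˣ, IsCocycle3 K ν → ∀ s ∈ K, (starRingEnd ℂ) (ν s : ℂ) = (ν s : ℂ) := by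
    intro ν hν s hs
    have h1 := hν s t₀
    have h2 := hν t₀ s
    rw [if_neg ht₀] at h1
    rw [if_pos hs] at h2
    rw [mul_comm s t₀, h2] at h1
    have h3 : (starRingEnd ℂ) (ν s : ℂ) * (ν t₀ : ℂ) = (ν s : ℂ) * (ν t₀ : ℂ) := by
      rw [← h1]; ring
    exact mul_right_cancel₀ (Units.ne_zero (ν t₀)) h3
  refine ⟨?_, ?_, ?_⟩
  · -- part (a)
    intro ν hν
    have him : ∀ s ∈ K, ((ν s : ℂ)).im = 0 := fun s hs =>
      Complex.conj_eq_iff_im.1 (real_on_K ν hν s hs)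
    refine ⟨him, fun t => ?_⟩
    have h := hν t t
    by_cases ht : t ∈ K
    · rw [if_pos ht] at h
      have h0 : ((ν t : ℂ)).im = 0 := him t ht
      have hre : ((ν t : ℂ)).re ≠ 0 := by
        intro hr
        exact Units.ne_zero (ν t) (Complex.ext hr h0)
      rw [h, Complex.mul_re, h0]
      simpa using (mul_self_pos.2 hre)
    · rw [if_neg ht] at h
      rw [h, ← Complex.normSq_eq_conj_mul_self]
      simpa using Complex.normSq_pos.2 (Units.ne_zero (ν t))
  · -- part (b)
    intro ν
    constructor
    · rintro ⟨hν, h1⟩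
      refine ⟨ν t₀, ?_, ?_⟩
      · have h := hν t₀ t₀
        rw [if_neg ht₀, ← Complex.normSq_eq_conj_mul_self] at h
        have h2 : (ν (t₀ * t₀) : ℂ) = 1 := by rw [h1 _ (hsq t₀)]; rfl
        rw [h2] at h
        have habs : (‖(ν t₀ : ℂ)‖) ^ 2 = 1 := by
          rw [Complex.sq_norm]; exact_mod_cast h.symm
        nlinarith [norm_nonneg ((ν t₀ : ℂ)), habs]
      · funext t
        by_cases ht : t ∈ K
        · rw [if_pos ht]; exact h1 t ht
        · rw [if_neg ht]
          have h := hν (t * t₀⁻¹) t₀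
          rw [if_neg ht₀, h1 _ (hmem t ht)] at h
          have ht' : t * t₀⁻¹ * t₀ = t := by group
          rw [ht'] at h
          ext
          rw [h]
          simp
    · rintro ⟨z, hz, rfl⟩
      have hz2 : (starRingEnd ℂ) (z : ℂ) * (z : ℂ) = 1 := by
        rw [← Complex.normSq_eq_conj_mul_self, ← Complex.sq_norm, hz]; norm_num
      constructor
      · intro s t
        by_cases hs : s ∈ K <;> by_cases ht : t ∈ K <;>
          [ (have hst : s * t ∈ K := (hmul s t).2 (iff_of_true hs ht));
            (have hst : s * t ∉ K := fun h => ht (((hmul s t).1 h).1 hs));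
            (have hst : s * t ∉ K := fun h => hs (((hmul s t).1 h).2 ht));
            (have hst : s * t ∈ K := (hmul s t).2 (iff_of_false hs ht))] <;>
          simp [hs, ht, hst, hz2]
      · intro s hs
        simp [hs]
  · -- part (c)
    refine ⟨fun χ t => Units.mk0 ((realAux K t₀ (hsq t₀) hmem χ t : ℝ) : ℂ)
      (Complex.ofReal_ne_zero.2 (realAux_ne K t₀ (hsq t₀) hmem χ t)), ?_, ?_⟩
    · intro χ hχ
      have hpos : 0 < (χ ⟨t₀ * t₀, hsq t₀⟩ : ℝ) := hχ t₀
      have hhom := realAux_hom K t₀ (hsq t₀) hmem hmul χ hpos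
      constructor
      · intro s t
        rw [Units.val_mk0, Units.val_mk0, Units.val_mk0, hhom s t]
        have hconj : (starRingEnd ℂ) ((realAux K t₀ (hsq t₀) hmem χ s : ℝ) : ℂ)
            = ((realAux K t₀ (hsq t₀) hmem χ s : ℝ) : ℂ) := Complex.conj_ofReal _
        split <;> rw [Complex.ofReal_mul] <;> simp [hconj]
      · intro s
        rw [Units.val_mk0]
        congr 1
        unfold realAux
        rw [dif_pos s.2]
    · intro χ₁ χ₂
      funext t
      ext
      rw [Units.val_mul, Units.val_mk0, Units.val_mk0, Units.val_mk0,
        realAux_chi_mul, Complex.ofReal_mul]
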